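/- arXiv:2404.17863 — 3 statements merged into one kernel-verified Lean document; each statement's English description precedes it below -/
import Mathlib

section
/- For every x in the star-subalgebra 𝒪 of B(H) generated by A, B, D and the identity, there exist bounded operators S and S′ on H such that for all (i,j,k), (i′,j′,k′) ∈ ℕ×ℤ×ℤ one has ⟨e_{i′,j′,k′}, S e_{i,j,k}⟩ = (d(i′,j′,k′) − d(i,j,k))·⟨e_{i′,j′,k′}, x e_{i,j,k}⟩ and ⟨e_{i′,j′,k′}, S′ e_{i,j,k}⟩ = (conj(d(i′,j′,k′)) − conj(d(i,j,k)))·⟨e_{i′,j′,k′}, x e_{i,j,k}⟩. (That is, the commutators [T, x] and [T*, x] with the unbounded diagonal operator T : e_{i,j,k} ↦ d(i,j,k)·e_{i,j,k} extend to bounded operators on H.) -/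
open scoped InnerProductSpace
noncomputable section

/-- The Hilbert space `H = ℓ²(ℕ × ℤ × ℤ)`. -/
abbrev UqH : Type := lp (fun _ : ℕ × ℤ × ℤ => ℂ) 2

/-- The standard orthonormal basis vectors `e_{i,j,k}` of `H`. -/
def e (i : ℕ) (j k : ℤ) : UqH := lp.single 2 (i, j, k) 1

/-- The eigenvalue function `d(i,j,k) = ±i + j + √−1·k` (sign `+` if `j ≥ 0`, `−` if `j < 0`)
of the diagonal operator `T`. -/
def dEig (i : ℕ) (j k : ℤ) : ℂ :=
  if 0 ≤ j then (i : ℂ) + (j : ℂ) + Complex.I * (k : ℂ)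
  else -(i : ℂ) + (j : ℂ) + Complex.I * (k : ℂ)

namespace CommDirac

open scoped ENNReal

abbrev ι3 : Type := ℕ × ℤ × ℤ

def E (m : ι3) : UqH := lp.single 2 m 1

def dd (m : ι3) : ℂ := dEig m.1 m.2.1 m.2.2

def ddc (m : ι3) : ℂ := (starRingEnd ℂ) (dd m)

lemma coord (m : ι3) (w : UqH) : ⟪E m, w⟫_ℂ = w m := by
  rw [E, lp.inner_single_left]
  simp

lemma hasSum_coord (S : UqH →L[ℂ] UqH) (v : UqH) (m' : ι3) :
    HasSum (fun n => v n * (S (E n)) m') ((S v) m') := by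
  have h0 : HasSum (fun n : ι3 => lp.single 2 n (v n)) v :=
    lp.hasSum_single ENNReal.ofNat_ne_top v
  have h1 := h0.mapL ((innerSL ℂ (E m')).comp S)
  simp only [ContinuousLinearMap.comp_apply, innerSL_apply_apply] at h1
  have h2 : ∀ n : ι3, ⟪E m', S (lp.single 2 n (v n))⟫_ℂ = v n * (S (E n)) m' := by
    intro n
    have hs : lp.single 2 n (v n) = v n • E n := by
      rw [E, ← lp.single_smul, smul_eq_mul, mul_one]
    rw [hs, map_smul, inner_smul_right, coord]
  simp only [h2, coord] at h1
  exact h1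

lemma adjoint_coord (T : UqH →L[ℂ] UqH) (m m' : ι3) :
    ((ContinuousLinearMap.adjoint T) (E m)) m' = (starRingEnd ℂ) ((T (E m')) m) := by
  rw [← coord, ContinuousLinearMap.adjoint_inner_right, ← inner_conj_symm, coord]

def Q (c : ι3 → ℂ) (x S : UqH →L[ℂ] UqH) : Prop :=
  ∀ m m' : ι3, (S (E m)) m' = (c m' - c m) * ((x (E m)) m')

lemma Q_add {c : ι3 → ℂ} {x y Sx Sy : UqH →L[ℂ] UqH} (hx : Q c x Sx) (hy : Q c y Sy) :
    Q c (x + y) (Sx + Sy) := by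
  intro m m'
  simp only [ContinuousLinearMap.add_apply, lp.coeFn_add, Pi.add_apply, hx m m', hy m m']
  ring

lemma Q_algebraMap (c : ι3 → ℂ) (r : ℂ) :
    Q c (algebraMap ℂ (UqH →L[ℂ] UqH) r) 0 := by
  intro m m'
  have h : (algebraMap ℂ (UqH →L[ℂ] UqH) r) (E m) = r • E m := by
    rw [Algebra.algebraMap_eq_smul_one, ContinuousLinearMap.smul_apply,
      ContinuousLinearMap.one_apply]
  rw [h]
  by_cases h' : m' = m
  · subst h'
    simp
  · simp only [ContinuousLinearMap.zero_apply, lp.coeFn_zero, Pi.zero_apply,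
      lp.coeFn_smul, Pi.smul_apply, E, lp.single_apply_ne _ _ _ h', smul_zero, mul_zero]

lemma Q_mul {c : ι3 → ℂ} {x y Sx Sy : UqH →L[ℂ] UqH} (hx : Q c x Sx) (hy : Q c y Sy) :
    Q c (x * y) (Sx ∘L y + x ∘L Sy) := by
  intro m m'
  have h1 := hasSum_coord Sx (y (E m)) m'
  have h2 := hasSum_coord x (Sy (E m)) m'
  have h3 := (hasSum_coord x (y (E m)) m').mul_left (c m' - c m)
  have h12 := h1.add h2
  have key : (fun n => (y (E m)) n * (Sx (E n)) m' + (Sy (E m)) n * (x (E n)) m')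
      = fun n => (c m' - c m) * ((y (E m)) n * (x (E n)) m') := by
    funext n
    rw [hx n m', hy m n]
    ring
  rw [key] at h12
  have hfin := h12.unique h3
  simp only [ContinuousLinearMap.add_apply, ContinuousLinearMap.coe_comp', Function.comp_apply,
    lp.coeFn_add, Pi.add_apply, ContinuousLinearMap.mul_apply]
  exact hfin

lemma Q_star {c : ι3 → ℂ} {x S' : UqH →L[ℂ] UqH}
    (h : Q (fun m => (starRingEnd ℂ) (c m)) x S') :
    Q c (star x) (-(ContinuousLinearMap.adjoint S')) := by
  intro m m'
  have hS : ((-(ContinuousLinearMap.adjoint S')) (E m)) m'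
      = -(((ContinuousLinearMap.adjoint S') (E m)) m') := by
    simp [lp.coeFn_neg]
  rw [hS, adjoint_coord, h m' m, ContinuousLinearMap.star_eq_adjoint, adjoint_coord]
  simp only [map_mul, map_sub, Complex.conj_conj]
  ring

/-! ### Weighted shift operators -/

def wsFun (τ : ι3 ≃ ι3) (f : ι3 → ℂ) (v : UqH) : ∀ _ : ι3, ℂ := fun m => f m * v (τ.symm m)

lemma wsFun_mem (τ : ι3 ≃ ι3) (f : ι3 → ℂ) {C : ℝ} (hf : ∀ m, ‖f m‖ ≤ C) (v : UqH) :
    Memℓp (wsFun τ f v) 2 := by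
  apply memℓp_gen
  have hv : Summable fun m : ι3 => ‖v m‖ ^ (2 : ℝ≥0∞).toReal :=
    (lp.memℓp v).summable (by norm_num)
  have h2 : (0:ℝ) ≤ (2 : ℝ≥0∞).toReal := by norm_num
  have hv' : Summable fun m : ι3 =>
      C ^ (2 : ℝ≥0∞).toReal * ‖v (τ.symm m)‖ ^ (2 : ℝ≥0∞).toReal :=
    (((Equiv.summable_iff τ.symm).2 hv)).mul_left _
  refine hv'.of_nonneg_of_le (fun m => Real.rpow_nonneg (norm_nonneg _) _) fun m => ?_
  calc ‖wsFun τ f v m‖ ^ (2 : ℝ≥0∞).toReal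
      = (‖f m‖ * ‖v (τ.symm m)‖) ^ (2 : ℝ≥0∞).toReal := by rw [wsFun, norm_mul]
    _ = ‖f m‖ ^ (2 : ℝ≥0∞).toReal * ‖v (τ.symm m)‖ ^ (2 : ℝ≥0∞).toReal :=
        Real.mul_rpow (norm_nonneg _) (norm_nonneg _)
    _ ≤ C ^ (2 : ℝ≥0∞).toReal * ‖v (τ.symm m)‖ ^ (2 : ℝ≥0∞).toReal :=
        mul_le_mul_of_nonneg_right (Real.rpow_le_rpow (norm_nonneg _) (hf m) h2)
          (Real.rpow_nonneg (norm_nonneg _) _)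

lemma wsFun_norm (τ : ι3 ≃ ι3) (f : ι3 → ℂ) {C : ℝ} (hC : 0 ≤ C) (hf : ∀ m, ‖f m‖ ≤ C)
    (v : UqH) : ‖(⟨wsFun τ f v, wsFun_mem τ f hf v⟩ : UqH)‖ ≤ C * ‖v‖ := by
  have hp : (0:ℝ) < (2 : ℝ≥0∞).toReal := by norm_num
  refine lp.norm_le_of_tsum_le hp (by positivity) ?_
  have hv : Summable fun m : ι3 => ‖v m‖ ^ (2 : ℝ≥0∞).toReal :=
    (lp.memℓp v).summable hp
  have hv' : Summable fun m : ι3 =>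
      C ^ (2 : ℝ≥0∞).toReal * ‖v (τ.symm m)‖ ^ (2 : ℝ≥0∞).toReal :=
    (((Equiv.summable_iff τ.symm).2 hv)).mul_left _
  have hle : ∀ m : ι3, ‖wsFun τ f v m‖ ^ (2 : ℝ≥0∞).toReal
      ≤ C ^ (2 : ℝ≥0∞).toReal * ‖v (τ.symm m)‖ ^ (2 : ℝ≥0∞).toReal := by
    intro m
    calc ‖wsFun τ f v m‖ ^ (2 : ℝ≥0∞).toReal
        = (‖f m‖ * ‖v (τ.symm m)‖) ^ (2 : ℝ≥0∞).toReal := by rw [wsFun, norm_mul]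
      _ = ‖f m‖ ^ (2 : ℝ≥0∞).toReal * ‖v (τ.symm m)‖ ^ (2 : ℝ≥0∞).toReal :=
          Real.mul_rpow (norm_nonneg _) (norm_nonneg _)
      _ ≤ _ :=
          mul_le_mul_of_nonneg_right (Real.rpow_le_rpow (norm_nonneg _) (hf m) hp.le)
            (Real.rpow_nonneg (norm_nonneg _) _)
  have hsum : Summable fun m : ι3 => ‖wsFun τ f v m‖ ^ (2 : ℝ≥0∞).toReal :=
    hv'.of_nonneg_of_le (fun m => Real.rpow_nonneg (norm_nonneg _) _) hle
  calc (∑' m : ι3, ‖(⟨wsFun τ f v, wsFun_mem τ f hf v⟩ : UqH) m‖ ^ (2 : ℝ≥0∞).toReal)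
      = ∑' m : ι3, ‖wsFun τ f v m‖ ^ (2 : ℝ≥0∞).toReal := rfl
    _ ≤ ∑' m : ι3, C ^ (2 : ℝ≥0∞).toReal * ‖v (τ.symm m)‖ ^ (2 : ℝ≥0∞).toReal :=
        Summable.tsum_le_tsum hle hsum hv'
    _ = C ^ (2 : ℝ≥0∞).toReal * ∑' m : ι3, ‖v (τ.symm m)‖ ^ (2 : ℝ≥0∞).toReal := by
        rw [tsum_mul_left]
    _ = C ^ (2 : ℝ≥0∞).toReal * ∑' m : ι3, ‖v m‖ ^ (2 : ℝ≥0∞).toReal := by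
        rw [τ.symm.tsum_eq (fun m => ‖v m‖ ^ (2 : ℝ≥0∞).toReal)]
    _ = C ^ (2 : ℝ≥0∞).toReal * ‖v‖ ^ (2 : ℝ≥0∞).toReal := by
        rw [lp.norm_rpow_eq_tsum hp]
    _ = (C * ‖v‖) ^ (2 : ℝ≥0∞).toReal := (Real.mul_rpow hC (norm_nonneg _)).symm

def wshift (τ : ι3 ≃ ι3) (f : ι3 → ℂ) (C : ℝ) (hC : 0 ≤ C) (hf : ∀ m, ‖f m‖ ≤ C) :
    UqH →L[ℂ] UqH :=
  LinearMap.mkContinuous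
    { toFun := fun v => (⟨wsFun τ f v, wsFun_mem τ f hf v⟩ : UqH)
      map_add' := fun v w => by
        apply lp.ext
        funext m
        simp only [lp.coeFn_add, Pi.add_apply]
        show wsFun τ f (v + w) m = wsFun τ f v m + wsFun τ f w m
        simp only [wsFun, lp.coeFn_add, Pi.add_apply]
        ring
      map_smul' := fun a v => by
        apply lp.ext
        funext m
        simp only [RingHom.id_apply, lp.coeFn_smul, Pi.smul_apply]
        show wsFun τ f (a • v) m = a • wsFun τ f v m
        simp only [wsFun, lp.coeFn_smul, Pi.smul_apply, smul_eq_mul]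
        ring }
    C (fun v => wsFun_norm τ f hC hf v)

lemma wshift_single (τ : ι3 ≃ ι3) (f : ι3 → ℂ) (C : ℝ) (hC : 0 ≤ C) (hf : ∀ m, ‖f m‖ ≤ C)
    (m : ι3) : wshift τ f C hC hf (E m) = f (τ m) • E (τ m) := by
  apply lp.ext
  funext m'
  show wsFun τ f (E m) m' = (f (τ m) • E (τ m)) m'
  simp only [lp.coeFn_smul, Pi.smul_apply, smul_eq_mul, wsFun]
  by_cases h : m' = τ m
  · subst h
    rw [Equiv.symm_apply_apply]
    simp [E, lp.single_apply_self]
  · have h1 : τ.symm m' ≠ m := fun hc => h (by rw [← hc, Equiv.apply_symm_apply])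
    simp only [E]
    rw [lp.single_apply_ne _ _ _ h1, lp.single_apply_ne _ _ _ h, mul_zero, mul_zero]

lemma Q_of_shift (c : ι3 → ℂ) (x S : UqH →L[ℂ] UqH) (σ : ι3 → ι3) (co w : ι3 → ℂ)
    (hx : ∀ m, x (E m) = co m • E (σ m)) (hS : ∀ m, S (E m) = w m • E (σ m))
    (hw : ∀ m, w m = (c (σ m) - c m) * co m) : Q c x S := by
  intro m m'
  rw [hx, hS, hw]
  by_cases h : m' = σ m
  · subst h
    simp only [lp.coeFn_smul, Pi.smul_apply, smul_eq_mul, E, lp.single_apply_self]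
    ring
  · simp only [lp.coeFn_smul, Pi.smul_apply, smul_eq_mul, E, lp.single_apply_ne _ _ _ h,
      mul_zero]

/-! ### Eigenvalue difference computations for the generators -/

def gA : ι3 → ℂ := fun m => if 0 ≤ m.2.1 then 1 else -1

lemma gA_norm (m : ι3) : ‖gA m‖ ≤ 1 := by
  simp only [gA]; split <;> simp

lemma dd_A (i : ℕ) (j k : ℤ) : dd (i + 1, j, k) - dd (i, j, k) = gA (i + 1, j, k) := by
  by_cases h : 0 ≤ j <;> simp only [dd, dEig, gA, h, if_true, if_false] <;> push_cast <;> ring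

lemma ddc_A (i : ℕ) (j k : ℤ) : ddc (i + 1, j, k) - ddc (i, j, k) = gA (i + 1, j, k) := by
  rw [ddc, ddc, ← map_sub, dd_A]
  simp only [gA]
  split <;> simp

lemma dd_D (i : ℕ) (j k : ℤ) : dd (i, j, k + 1) - dd (i, j, k) = Complex.I := by
  by_cases h : 0 ≤ j <;> simp only [dd, dEig, h, if_true, if_false] <;> push_cast <;> ring

lemma ddc_D (i : ℕ) (j k : ℤ) : ddc (i, j, k + 1) - ddc (i, j, k) = -Complex.I := by
  rw [ddc, ddc, ← map_sub, dd_D]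
  simp

lemma dd_B (i : ℕ) (j k : ℤ) :
    ∃ r : ℝ, dd (i, j + 1, k) - dd (i, j, k) = (r : ℂ) ∧ |r| ≤ 2 * i + 1 := by
  refine ⟨if 0 ≤ j then 1 else if 0 ≤ j + 1 then 2 * i + 1 else 1, ?_, ?_⟩
  · by_cases h : 0 ≤ j
    · have h1 : 0 ≤ j + 1 := by omega
      simp only [dd, dEig, h, h1, if_true]
      push_cast; ring
    · by_cases h1 : 0 ≤ j + 1
      · simp only [dd, dEig, h, h1, if_true, if_false]
        push_cast; ring
      · simp only [dd, dEig, h, h1, if_false]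
        push_cast; ring
  · have hi : (0 : ℝ) ≤ (i : ℝ) := Nat.cast_nonneg i
    split_ifs <;> rw [abs_of_nonneg (by positivity)] <;> linarith

def τB : ι3 ≃ ι3 := (Equiv.refl ℕ).prodCongr ((Equiv.addRight (1 : ℤ)).prodCongr (Equiv.refl ℤ))

def fB (q : ℂ) : ι3 → ℂ := fun m => (dd m - dd (m.1, m.2.1 - 1, m.2.2)) * q ^ m.1

lemma fB_shift (q : ℂ) (i : ℕ) (j k : ℤ) :
    fB q (i, j + 1, k) = (dd (i, j + 1, k) - dd (i, j, k)) * q ^ i := by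
  simp only [fB, add_sub_cancel_right]

lemma fB_norm (q : ℂ) (hq1 : ‖q‖ < 1) :
    ∃ C : ℝ, 0 ≤ C ∧ ∀ m : ι3, ‖fB q m‖ ≤ C := by
  set u : ℕ → ℝ := fun i => (2 * i + 1) * ‖q‖ ^ i with hu_def
  have hq0 : (0 : ℝ) ≤ ‖q‖ := norm_nonneg _
  have hu : Summable u := by
    have h1 : Summable (fun i : ℕ => (i : ℝ) * ‖q‖ ^ i) := by
      simpa [pow_one] using summable_pow_mul_geometric_of_norm_lt_one (R := ℝ) 1
        (r := (‖q‖ : ℝ)) (by rwa [Real.norm_eq_abs, abs_of_nonneg hq0])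
    have h2 : Summable (fun i : ℕ => ‖q‖ ^ i) :=
      summable_geometric_of_lt_one hq0 hq1
    refine ((h1.mul_left 2).add h2).congr fun i => ?_
    rw [hu_def]; ring
  have hupos : ∀ i : ℕ, 0 ≤ u i := fun i => by rw [hu_def]; positivity
  refine ⟨∑' i, u i, tsum_nonneg hupos, ?_⟩
  rintro ⟨i, j, k⟩
  have hle : u i ≤ ∑' i, u i := Summable.le_tsum hu i fun n _ => hupos n
  obtain ⟨r, hr, hr2⟩ := dd_B i (j - 1) k
  have hj : j - 1 + 1 = j := by ring
  rw [hj] at hr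
  calc ‖fB q (i, j, k)‖ = ‖dd (i, j, k) - dd (i, j - 1, k)‖ * ‖q ^ i‖ := norm_mul _ _
    _ = |r| * ‖q‖ ^ i := by
        rw [hr, Complex.norm_real, Real.norm_eq_abs, norm_pow]
    _ ≤ (2 * i + 1) * ‖q‖ ^ i :=
        mul_le_mul_of_nonneg_right hr2 (by positivity)
    _ ≤ ∑' i, u i := hle

lemma fB_conj (i : ℕ) (j k : ℤ) :
    ddc (i, j + 1, k) - ddc (i, j, k) = dd (i, j + 1, k) - dd (i, j, k) := by
  obtain ⟨r, hr, -⟩ := dd_B i j k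
  rw [ddc, ddc, ← map_sub, hr, Complex.conj_ofReal]

/-! ### The generators satisfy the commutator conditions -/

lemma QA_exists (q : ℂ) (A : UqH →L[ℂ] UqH)
    (hA : ∀ (i : ℕ) (j k : ℤ),
      A (e i j k) = ((Real.sqrt (1 - ‖q‖ ^ (2 * (i + 1))) : ℝ) : ℂ) • e (i + 1) j k) :
    ∃ S S' : UqH →L[ℂ] UqH, Q dd A S ∧ Q ddc A S' := by
  have hA' : ∀ m : ι3, A (E m) =
      ((Real.sqrt (1 - ‖q‖ ^ (2 * (m.1 + 1))) : ℝ) : ℂ) • E (m.1 + 1, m.2.1, m.2.2) :=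
    fun m => hA m.1 m.2.1 m.2.2
  set W := wshift (Equiv.refl ι3) gA 1 zero_le_one gA_norm with hW
  have hS : ∀ m : ι3, (W ∘L A) (E m) =
      (gA (m.1 + 1, m.2.1, m.2.2) *
        ((Real.sqrt (1 - ‖q‖ ^ (2 * (m.1 + 1))) : ℝ) : ℂ)) •
        E (m.1 + 1, m.2.1, m.2.2) := by
    intro m
    rw [ContinuousLinearMap.comp_apply, hA' m, map_smul, hW, wshift_single, smul_smul]
    rw [mul_comm]
    rfl
  refine ⟨W ∘L A, W ∘L A, ?_, ?_⟩
  · refine Q_of_shift dd A _ (fun m => (m.1 + 1, m.2.1, m.2.2)) _ _ hA' hS ?_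
    rintro ⟨i, j, k⟩
    dsimp only
    rw [dd_A i j k]
  · refine Q_of_shift ddc A _ (fun m => (m.1 + 1, m.2.1, m.2.2)) _ _ hA' hS ?_
    rintro ⟨i, j, k⟩
    dsimp only
    rw [ddc_A i j k]

lemma QB_exists (q : ℂ) (hq1 : ‖q‖ < 1) (B : UqH →L[ℂ] UqH)
    (hB : ∀ (i : ℕ) (j k : ℤ), B (e i j k) = (q ^ i) • e i (j + 1) k) :
    ∃ S S' : UqH →L[ℂ] UqH, Q dd B S ∧ Q ddc B S' := by
  obtain ⟨C, hC0, hC⟩ := fB_norm q hq1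
  have hB' : ∀ m : ι3, B (E m) = (q ^ m.1) • E (m.1, m.2.1 + 1, m.2.2) :=
    fun m => hB m.1 m.2.1 m.2.2
  set S := wshift τB (fB q) C hC0 hC with hSdef
  have hS : ∀ m : ι3, S (E m) = fB q (m.1, m.2.1 + 1, m.2.2) • E (m.1, m.2.1 + 1, m.2.2) :=
    fun m => wshift_single τB (fB q) C hC0 hC m
  refine ⟨S, S, ?_, ?_⟩
  · refine Q_of_shift dd B S (fun m => (m.1, m.2.1 + 1, m.2.2)) _ _ hB' hS ?_
    rintro ⟨i, j, k⟩
    dsimp only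
    rw [fB_shift]
  · refine Q_of_shift ddc B S (fun m => (m.1, m.2.1 + 1, m.2.2)) _ _ hB' hS ?_
    rintro ⟨i, j, k⟩
    dsimp only
    rw [fB_shift, fB_conj]

lemma QD_exists (θ : ℝ) (D : UqH →L[ℂ] UqH)
    (hD : ∀ (i : ℕ) (j k : ℤ),
      D (e i j k) =
        Complex.exp (-(2 * (Real.pi : ℂ) * (θ : ℂ) * (j : ℂ)) * Complex.I) • e i j (k + 1)) :
    ∃ S S' : UqH →L[ℂ] UqH, Q dd D S ∧ Q ddc D S' := by
  have hD' : ∀ m : ι3, D (E m) =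
      Complex.exp (-(2 * (Real.pi : ℂ) * (θ : ℂ) * (m.2.1 : ℂ)) * Complex.I) •
        E (m.1, m.2.1, m.2.2 + 1) :=
    fun m => hD m.1 m.2.1 m.2.2
  have hS : ∀ (a : ℂ) (m : ι3), (a • D) (E m) =
      (a * Complex.exp (-(2 * (Real.pi : ℂ) * (θ : ℂ) * (m.2.1 : ℂ)) * Complex.I)) •
        E (m.1, m.2.1, m.2.2 + 1) := by
    intro a m
    rw [ContinuousLinearMap.smul_apply, hD' m, smul_smul]
  refine ⟨Complex.I • D, (-Complex.I) • D, ?_, ?_⟩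
  · refine Q_of_shift dd D _ (fun m => (m.1, m.2.1, m.2.2 + 1)) _ _ hD' (hS Complex.I) ?_
    rintro ⟨i, j, k⟩
    dsimp only
    rw [dd_D i j k]
  · refine Q_of_shift ddc D _ (fun m => (m.1, m.2.1, m.2.2 + 1)) _ _ hD' (hS (-Complex.I)) ?_
    rintro ⟨i, j, k⟩
    dsimp only
    rw [ddc_D i j k]

end CommDirac

/-- for every `x` in the star-algebra generated by `A, B, D` and `1`, the
commutators `[T, x]` and `[T*, x]` with the unbounded diagonal operator
`T : e_{i,j,k} ↦ d(i,j,k)·e_{i,j,k}` extend to bounded operators `S`, `S′` on `H`. -/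
theorem commutators_with_Dirac_bounded
    (q : ℂ) (hq0 : 0 < ‖q‖) (hq1 : ‖q‖ < 1)
    (θ : ℝ) (hθ : θ = Complex.arg q / Real.pi)
    (A B D : UqH →L[ℂ] UqH)
    (hA : ∀ (i : ℕ) (j k : ℤ),
      A (e i j k) = ((Real.sqrt (1 - ‖q‖ ^ (2 * (i + 1))) : ℝ) : ℂ) • e (i + 1) j k)
    (hB : ∀ (i : ℕ) (j k : ℤ), B (e i j k) = (q ^ i) • e i (j + 1) k)
    (hD : ∀ (i : ℕ) (j k : ℤ),
      D (e i j k) = Complex.exp (-(2 * (Real.pi : ℂ) * (θ : ℂ) * (j : ℂ)) * Complex.I) • e i j (k + 1))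
    (x : UqH →L[ℂ] UqH) (hx : x ∈ StarAlgebra.adjoin ℂ ({A, B, D} : Set (UqH →L[ℂ] UqH))) :
    ∃ S S' : UqH →L[ℂ] UqH,
      ∀ (i : ℕ) (j k : ℤ) (i' : ℕ) (j' k' : ℤ),
        (⟪e i' j' k', S (e i j k)⟫_ℂ =
          (dEig i' j' k' - dEig i j k) * ⟪e i' j' k', x (e i j k)⟫_ℂ) ∧
        (⟪e i' j' k', S' (e i j k)⟫_ℂ =
          ((starRingEnd ℂ) (dEig i' j' k') - (starRingEnd ℂ) (dEig i j k)) *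
            ⟪e i' j' k', x (e i j k)⟫_ℂ) := by
  suffices h : ∃ S S' : UqH →L[ℂ] UqH, CommDirac.Q CommDirac.dd x S ∧
      CommDirac.Q CommDirac.ddc x S' by
    obtain ⟨S, S', hS, hS'⟩ := h
    refine ⟨S, S', fun i j k i' j' k' => ⟨?_, ?_⟩⟩
    · rw [show (⟪e i' j' k', S (e i j k)⟫_ℂ) = (S (e i j k)) (i', j', k') from
        CommDirac.coord _ _,
        show (⟪e i' j' k', x (e i j k)⟫_ℂ) = (x (e i j k)) (i', j', k') from
        CommDirac.coord _ _]
      exact hS (i, j, k) (i', j', k')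
    · rw [show (⟪e i' j' k', S' (e i j k)⟫_ℂ) = (S' (e i j k)) (i', j', k') from
        CommDirac.coord _ _,
        show (⟪e i' j' k', x (e i j k)⟫_ℂ) = (x (e i j k)) (i', j', k') from
        CommDirac.coord _ _]
      exact hS' (i, j, k) (i', j', k')
  have hQA := CommDirac.QA_exists q A hA
  have hQB := CommDirac.QB_exists q hq1 B hB
  have hQD := CommDirac.QD_exists θ D hD
  induction hx using StarAlgebra.adjoin_induction with
  | mem z hz =>
    simp only [Set.mem_insert_iff, Set.mem_singleton_iff] at hz
    rcases hz with rfl | rfl | rfl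
    exacts [hQA, hQB, hQD]
  | algebraMap r => exact ⟨0, 0, CommDirac.Q_algebraMap _ r, CommDirac.Q_algebraMap _ r⟩
  | add z w hz hw ihz ihw =>
    obtain ⟨S1, S1', h1, h1'⟩ := ihz
    obtain ⟨S2, S2', h2, h2'⟩ := ihw
    exact ⟨S1 + S2, S1' + S2', CommDirac.Q_add h1 h2, CommDirac.Q_add h1' h2'⟩
  | mul z w hz hw ihz ihw =>
    obtain ⟨S1, S1', h1, h1'⟩ := ihz
    obtain ⟨S2, S2', h2, h2'⟩ := ihw
    exact ⟨S1 ∘L w + z ∘L S2, S1' ∘L w + z ∘L S2',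
      CommDirac.Q_mul h1 h2, CommDirac.Q_mul h1' h2'⟩
  | star z hz ih =>
    obtain ⟨S1, S1', h1, h1'⟩ := ih
    refine ⟨-(ContinuousLinearMap.adjoint S1'), -(ContinuousLinearMap.adjoint S1), ?_, ?_⟩
    · exact CommDirac.Q_star h1'
    · refine CommDirac.Q_star (c := CommDirac.ddc) ?_
      have heq : (fun m => (starRingEnd ℂ) (CommDirac.ddc m)) = CommDirac.dd :=
        funext fun m => Complex.conj_conj _
      rw [heq]
      exact h1
end
end

section
/- There exists a constant C > 0 such that for every real R ≥ 2, Σ_{(i,j,k) ∈ ℕ×ℤ×ℤ, (i,j,k) ≠ (0,0,0), (i+|j|)² + k² ≤ R} ((i + |j|)² + k²)^{−3/2} ≤ C·log R. (This expresses that |𝒟|^{−3} belongs to the Dixmier ideal L^{(1,∞)}, i.e., the spectral triple is 3⁺-summable, since the nonzero eigenvalues of |𝒟| are √((i+|j|)² + k²).) -/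
noncomputable section

private lemma key_half_sq {i : ℕ} {j k : ℤ} {m : ℕ} (h : i + j.natAbs + k.natAbs = m) :
    (m : ℝ) ^ 2 / 2 ≤ ((i : ℝ) + |(j : ℝ)|) ^ 2 + (k : ℝ) ^ 2 := by
  have hm : (m : ℝ) = ((i : ℝ) + |(j : ℝ)|) + |(k : ℝ)| := by
    rw [← h]; push_cast [Nat.cast_natAbs]; ring
  have hk : (k : ℝ) ^ 2 = |(k : ℝ)| ^ 2 := (sq_abs _).symm
  rw [hm, hk]
  nlinarith [sq_nonneg (((i : ℝ) + |(j : ℝ)|) - |(k : ℝ)|)]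

private lemma two_rpow_le_three : (2 : ℝ) ^ ((3 : ℝ) / 2) ≤ 3 := by
  have h8 : (2 : ℝ) ^ ((3 : ℝ) / 2) = Real.sqrt 8 := by
    rw [show (8 : ℝ) = 2 ^ (3 : ℕ) by norm_num, Real.sqrt_eq_rpow,
      ← Real.rpow_natCast 2 3, ← Real.rpow_mul (by norm_num)]
    norm_num
  rw [h8, show (3 : ℝ) = Real.sqrt 9 by
    rw [show (9 : ℝ) = 3 ^ 2 by norm_num, Real.sqrt_sq (by norm_num)]]
  exact Real.sqrt_le_sqrt (by norm_num)

/-- there is a constant `C > 0` such that for every `R ≥ 2`,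
`∑_{(i,j,k) ≠ 0, (i+|j|)² + k² ≤ R} ((i+|j|)² + k²)^{−3/2} ≤ C·log R`.
This expresses that `|𝒟|⁻³` lies in the Dixmier ideal `L^{(1,∞)}`, i.e. the spectral
triple is `3⁺`-summable, the nonzero eigenvalues of `|𝒟|` being `√((i+|j|)² + k²)`. -/
theorem dirac_three_plus_summable :
    ∃ C : ℝ, 0 < C ∧ ∀ R : ℝ, 2 ≤ R →
      (∑' p : {p : ℕ × ℤ × ℤ // p ≠ ((0 : ℕ), (0 : ℤ), (0 : ℤ)) ∧
          ((p.1 : ℝ) + |(p.2.1 : ℝ)|) ^ 2 + (p.2.2 : ℝ) ^ 2 ≤ R},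
        ((((p : ℕ × ℤ × ℤ).1 : ℝ) + |((p : ℕ × ℤ × ℤ).2.1 : ℝ)|) ^ 2 +
            ((p : ℕ × ℤ × ℤ).2.2 : ℝ) ^ 2) ^ (-(3 / 2) : ℝ))
        ≤ C * Real.log R := by
  refine ⟨100, by norm_num, fun R hR => ?_⟩
  have hlog2 : (0.6931471803 : ℝ) < Real.log 2 := Real.log_two_gt_d9
  have hlogR : Real.log 2 ≤ Real.log R := Real.log_le_log (by norm_num) hR
  have hC0 : (0 : ℝ) ≤ 100 * Real.log R := by nlinarith
  apply tsum_le_of_sum_le' hC0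
  intro s
  set M := Nat.floor (Real.sqrt (2 * R)) with hMdef
  have hmaps : ∀ p ∈ s, p.1.1 + p.1.2.1.natAbs + p.1.2.2.natAbs ∈ Finset.Icc 1 M := by
    rintro ⟨⟨i, j, k⟩, hne, hle⟩ _
    simp only [Finset.mem_Icc]
    constructor
    · by_contra h
      have hi : i = 0 := by omega
      have hj : j = 0 := by omega
      have hk : k = 0 := by omega
      subst hi hj hk
      exact hne rfl
    · have hsq := key_half_sq (i := i) (j := j) (k := k) rfl
      apply Nat.le_floor
      apply Real.le_sqrt_of_sq_le
      simp only at hle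
      nlinarith
  rw [← Finset.sum_fiberwise_of_maps_to hmaps]
  have inner : ∀ m ∈ Finset.Icc 1 M,
      (∑ p ∈ s.filter (fun p => p.1.1 + p.1.2.1.natAbs + p.1.2.2.natAbs = m),
        ((((p : ℕ × ℤ × ℤ).1 : ℝ) + |((p : ℕ × ℤ × ℤ).2.1 : ℝ)|) ^ 2 +
            ((p : ℕ × ℤ × ℤ).2.2 : ℝ) ^ 2) ^ (-(3 / 2) : ℝ)) ≤ 27 / (m : ℝ) := by
    intro m hm
    have hm1 : 1 ≤ m := (Finset.mem_Icc.mp hm).1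
    have hmR : (1 : ℝ) ≤ (m : ℝ) := by exact_mod_cast hm1
    have hterm : ∀ p ∈ s.filter (fun p => p.1.1 + p.1.2.1.natAbs + p.1.2.2.natAbs = m),
        ((((p : ℕ × ℤ × ℤ).1 : ℝ) + |((p : ℕ × ℤ × ℤ).2.1 : ℝ)|) ^ 2 +
            ((p : ℕ × ℤ × ℤ).2.2 : ℝ) ^ 2) ^ (-(3 / 2) : ℝ) ≤ 3 / (m : ℝ) ^ 3 := by
      intro p hp
      have hkm : p.1.1 + p.1.2.1.natAbs + p.1.2.2.natAbs = m := (Finset.mem_filter.mp hp).2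
      have hsq := key_half_sq hkm
      set Q : ℝ := ((p.1.1 : ℝ) + |(p.1.2.1 : ℝ)|) ^ 2 + (p.1.2.2 : ℝ) ^ 2 with hQdef
      have hQpos : (0 : ℝ) < Q := by nlinarith
      have h1 : ((m : ℝ) ^ 2 / 2) ^ ((3 : ℝ) / 2) ≤ Q ^ ((3 : ℝ) / 2) :=
        Real.rpow_le_rpow (by positivity) hsq (by norm_num)
      have h2 : ((m : ℝ) ^ 2 / 2) ^ ((3 : ℝ) / 2) = (m : ℝ) ^ 3 / 2 ^ ((3 : ℝ) / 2) := by
        rw [Real.div_rpow (by positivity) (by norm_num)]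
        congr 1
        rw [← Real.rpow_natCast (m : ℝ) 2, ← Real.rpow_mul (by positivity),
          ← Real.rpow_natCast (m : ℝ) 3]
        norm_num
      have h3 : (m : ℝ) ^ 3 / 3 ≤ Q ^ ((3 : ℝ) / 2) := by
        refine le_trans ?_ h1
        rw [h2]
        apply div_le_div_of_nonneg_left (by positivity) (by positivity) two_rpow_le_three
      have hQ3 : (0 : ℝ) < (m : ℝ) ^ 3 / 3 := by positivity
      calc Q ^ (-(3 / 2) : ℝ) = (Q ^ ((3 : ℝ) / 2))⁻¹ := by
            rw [← Real.rpow_neg hQpos.le]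
        _ ≤ ((m : ℝ) ^ 3 / 3)⁻¹ := by
            apply inv_anti₀ hQ3 h3
        _ = 3 / (m : ℝ) ^ 3 := by
            rw [inv_div]
    have hcard : (s.filter (fun p => p.1.1 + p.1.2.1.natAbs + p.1.2.2.natAbs = m)).card
        ≤ (2 * m + 1) ^ 2 := by
      have := Finset.card_le_card_of_injOn
        (f := fun p : {p : ℕ × ℤ × ℤ // p ≠ ((0 : ℕ), (0 : ℤ), (0 : ℤ)) ∧
            ((p.1 : ℝ) + |(p.2.1 : ℝ)|) ^ 2 + (p.2.2 : ℝ) ^ 2 ≤ R} => (p.1.2.1, p.1.2.2))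
        (s := s.filter (fun p => p.1.1 + p.1.2.1.natAbs + p.1.2.2.natAbs = m))
        (t := Finset.Icc (-(m : ℤ)) m ×ˢ Finset.Icc (-(m : ℤ)) m)
        ?_ ?_
      · refine le_trans this ?_
        rw [Finset.card_product, Int.card_Icc]
        have h4 : ((m : ℤ) + 1 - -(m : ℤ)).toNat = 2 * m + 1 := by omega
        rw [h4, pow_two]
      · intro p hp
        have hkm : p.1.1 + p.1.2.1.natAbs + p.1.2.2.natAbs = m := (Finset.mem_filter.mp hp).2
        simp only [Finset.mem_coe, Finset.mem_product, Finset.mem_Icc]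
        omega
      · intro p hp q hq h
        simp only [Finset.coe_filter, Set.mem_setOf_eq] at hp hq
        have hj : p.1.2.1 = q.1.2.1 := congrArg Prod.fst h
        have hk : p.1.2.2 = q.1.2.2 := congrArg Prod.snd h
        have hi : p.1.1 = q.1.1 := by omega
        exact Subtype.ext (Prod.ext hi (Prod.ext hj hk))
    calc (∑ p ∈ s.filter (fun p => p.1.1 + p.1.2.1.natAbs + p.1.2.2.natAbs = m),
          ((((p : ℕ × ℤ × ℤ).1 : ℝ) + |((p : ℕ × ℤ × ℤ).2.1 : ℝ)|) ^ 2 +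
              ((p : ℕ × ℤ × ℤ).2.2 : ℝ) ^ 2) ^ (-(3 / 2) : ℝ))
        ≤ (s.filter (fun p => p.1.1 + p.1.2.1.natAbs + p.1.2.2.natAbs = m)).card
            • (3 / (m : ℝ) ^ 3) := Finset.sum_le_card_nsmul _ _ _ hterm
      _ ≤ ((2 * m + 1) ^ 2) • (3 / (m : ℝ) ^ 3) := nsmul_le_nsmul_left (by positivity) hcard
      _ ≤ 27 / (m : ℝ) := by
          rw [nsmul_eq_mul]
          push_cast
          rw [show ((2 * (m:ℝ) + 1) ^ 2) * (3 / (m:ℝ) ^ 3)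
              = (3 * (2 * (m:ℝ) + 1) ^ 2) / (m:ℝ) ^ 3 by ring,
            div_le_div_iff₀ (by positivity) (by positivity)]
          have h1 : (0:ℝ) ≤ (m:ℝ)^2 * ((m:ℝ) - 1) :=
            mul_nonneg (by positivity) (by linarith)
          have h2 : (0:ℝ) ≤ (m:ℝ) * ((m:ℝ) - 1) :=
            mul_nonneg (by positivity) (by linarith)
          nlinarith [h1, h2]
  calc (∑ m ∈ Finset.Icc 1 M, ∑ p ∈ s.filter
          (fun p => p.1.1 + p.1.2.1.natAbs + p.1.2.2.natAbs = m),
        ((((p : ℕ × ℤ × ℤ).1 : ℝ) + |((p : ℕ × ℤ × ℤ).2.1 : ℝ)|) ^ 2 +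
            ((p : ℕ × ℤ × ℤ).2.2 : ℝ) ^ 2) ^ (-(3 / 2) : ℝ))
      ≤ ∑ m ∈ Finset.Icc 1 M, 27 / (m : ℝ) := Finset.sum_le_sum inner
    _ = 27 * (harmonic M : ℝ) := by
        rw [harmonic_eq_sum_Icc]
        push_cast
        rw [Finset.mul_sum]
        exact Finset.sum_congr rfl fun x _ => by rw [div_eq_mul_inv]
    _ ≤ 27 * (1 + Real.log M) := by
        have := harmonic_le_one_add_log M
        linarith
    _ ≤ 100 * Real.log R := by
        have hMle : (M : ℝ) ≤ Real.sqrt (2 * R) := Nat.floor_le (Real.sqrt_nonneg _)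
        have hlogM : Real.log M ≤ Real.log (Real.sqrt (2 * R)) := by
          rcases Nat.eq_zero_or_pos M with h | h
          · simp only [h, Nat.cast_zero, Real.log_zero]
            apply Real.log_nonneg
            apply Real.le_sqrt_of_sq_le
            nlinarith
          · exact Real.log_le_log (by exact_mod_cast h) hMle
        rw [Real.log_sqrt (by linarith), Real.log_mul (by norm_num) (by linarith)] at hlogM
        nlinarith
end
end

section
/- Let 𝒪 be the star-subalgebra of B(H) generated by A, B, D and the identity. For x ∈ 𝒪, the following are equivalent: (1) for all (i,j,k), (i′,j′,k′) ∈ ℕ×ℤ×ℤ with d(i′,j′,k′) ≠ d(i,j,k), one has ⟨e_{i′,j′,k′}, x e_{i,j,k}⟩ = 0 (i.e., x commutes with the diagonal operator T : e_{i,j,k} ↦ d(i,j,k)·e_{i,j,k} and with T*, so x lies in the kernel of the derivation [𝒟, ·]); (2) x belongs to the linear span of the operators (B B*)^{m} for m ∈ ℕ (note B B* e_{i,j,k} = |q|^{2i} e_{i,j,k}). -/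
open scoped InnerProductSpace
noncomputable section

namespace UqAux

/-- the real (integer) part of `dEig` -/
def dRe (i : ℕ) (j : ℤ) : ℤ := if 0 ≤ j then (i : ℤ) + j else -(i : ℤ) + j

lemma dEig_eq (i : ℕ) (j k : ℤ) : dEig i j k = ((dRe i j : ℤ) : ℂ) + Complex.I * (k : ℂ) := by
  unfold dEig dRe; split_ifs <;> push_cast <;> ring

lemma dEig_eq_iff (i : ℕ) (j k : ℤ) (i' : ℕ) (j' k' : ℤ) :
    dEig i' j' k' = dEig i j k ↔ (dRe i' j' = dRe i j ∧ k' = k) := by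
  rw [dEig_eq, dEig_eq, Complex.ext_iff]
  simp only [Complex.add_re, Complex.add_im, Complex.intCast_re, Complex.intCast_im,
    Complex.mul_re, Complex.mul_im, Complex.I_re, Complex.I_im]
  constructor
  · rintro ⟨h1, h2⟩
    refine ⟨?_, ?_⟩
    · exact_mod_cast (by linarith : ((dRe i' j' : ℝ)) = (dRe i j : ℝ))
    · exact_mod_cast (by linarith : ((k' : ℝ)) = (k : ℝ))
  · rintro ⟨h1, h2⟩; subst h2; rw [h1]; simp

lemma e_apply (i : ℕ) (j k : ℤ) (α : ℕ × ℤ × ℤ) :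
    (e i j k : ∀ _ : ℕ × ℤ × ℤ, ℂ) α = if α = (i, j, k) then 1 else 0 := by
  rw [e, lp.single_apply]
  split <;> rename_i h
  · subst h; simp
  · simp [h]

lemma inner_e_left (i' : ℕ) (j' k' : ℤ) (v : UqH) :
    ⟪e i' j' k', v⟫_ℂ = v (i', j', k') := by
  rw [e, lp.inner_single_left]
  simp



/-- parity indicator: edge `t` is crossed an odd number of times by a path `0 → a`. -/
def chi (a t : ℤ) : Prop := (0 < t ∧ t ≤ a) ∨ (a < t ∧ t ≤ 0)

instance (a t : ℤ) : Decidable (chi a t) := by unfold chi; infer_instance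

/-- square root factor -/
def rt (q : ℂ) (n : ℤ) : ℂ := ((Real.sqrt (1 - ‖q‖ ^ n) : ℝ) : ℂ)

lemma rt_natCast (q : ℂ) (n : ℕ) : rt q (n : ℤ) = ((Real.sqrt (1 - ‖q‖ ^ n) : ℝ) : ℂ) := by
  rw [rt, zpow_natCast]

lemma rt_zero (q : ℂ) : rt q 0 = 0 := by
  simp [rt]

def sqrtProd (q : ℂ) (M : Multiset ℤ) (i : ℕ) : ℂ :=
  (M.map (fun s => rt q (2 * ((i : ℤ) + s)))).prod

def coefFn (q μ : ℂ) (p r : ℕ) (M : Multiset ℤ) (i : ℕ) : ℂ :=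
  μ * q ^ (p * i) * (starRingEnd ℂ) q ^ (r * i) * sqrtProd q M i

def phase (θ : ℝ) (c j : ℤ) : ℂ :=
  Complex.exp (-(2 * (Real.pi : ℂ) * (θ : ℂ) * ((c : ℂ) * (j : ℂ))) * Complex.I)

/-- The structural invariant for words in the generators. -/
def GoodWord (q : ℂ) (θ : ℝ) (w : UqH →L[ℂ] UqH) : Prop :=
  ∃ (a b c : ℤ) (μ : ℂ) (p r : ℕ) (M : Multiset ℤ),
    (∀ (i : ℕ) (j k : ℤ),
        w (e i j k) = (phase θ c j * coefFn q μ p r M i) • e ((i + a).toNat) (j + b) (k + c)) ∧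
    ((p : ℤ) - r = b) ∧
    (∀ t : ℤ, M.count t % 2 = if chi a t then 1 else 0) ∧
    (∀ s ∈ M, ∀ t : ℤ, (s ≤ t ∧ t ≤ 0) ∨ (1 ≤ t ∧ t ≤ s) → t ∈ M)

lemma sqrtProd_vanish (q : ℂ) {a : ℤ} {M : Multiset ℤ}
    (hpar : ∀ t : ℤ, M.count t % 2 = if chi a t then 1 else 0)
    {i : ℕ} (hi : (i : ℤ) + a < 0) : sqrtProd q M i = 0 := by
  have hmem : (-(i : ℤ)) ∈ M := by
    have h := hpar (-(i : ℤ))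
    rw [if_pos (show chi a (-(i:ℤ)) from Or.inr ⟨by omega, by omega⟩)] at h
    exact Multiset.count_pos.mp (by omega)
  refine Multiset.prod_eq_zero ?_
  have : rt q (2 * ((i : ℤ) + (-(i : ℤ)))) = 0 := by
    rw [show (2 * ((i : ℤ) + (-(i : ℤ)))) = 0 by ring, rt_zero]
  exact this ▸ Multiset.mem_map_of_mem _ hmem

lemma coefFn_vanish (q μ : ℂ) (p r : ℕ) {a : ℤ} {M : Multiset ℤ}
    (hpar : ∀ t : ℤ, M.count t % 2 = if chi a t then 1 else 0)
    {i : ℕ} (hi : (i : ℤ) + a < 0) : coefFn q μ p r M i = 0 := by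
  rw [coefFn, sqrtProd_vanish q hpar hi, mul_zero]

lemma goodWord_mul {q : ℂ} (hq : q ≠ 0) {θ : ℝ} {w w' : UqH →L[ℂ] UqH}
    (h : GoodWord q θ w) (h' : GoodWord q θ w') : GoodWord q θ (w * w') := by
  obtain ⟨a, b, c, μ, p, r, M, hact, hb, hpar, hconn⟩ := h
  obtain ⟨a', b', c', μ', p', r', M', hact', hb', hpar', hconn'⟩ := h'
  refine ⟨a + a', b + b', c + c',
    μ * μ' * phase θ c b' * q ^ ((p : ℤ) * a') * (starRingEnd ℂ) q ^ ((r : ℤ) * a'),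
    p + p', r + r', M' + M.map (· + a'), ?_, by omega, ?_, ?_⟩
  · intro i j k
    rw [ContinuousLinearMap.mul_apply, hact', map_smul, hact, smul_smul]
    by_cases hi : 0 ≤ (i : ℤ) + a'
    · have hi2 : (((((i : ℤ) + a').toNat) : ℕ) : ℤ) = (i : ℤ) + a' := Int.toNat_of_nonneg hi
      set i₂ := ((i : ℤ) + a').toNat with hi₂def
      have hidx : (((i₂ : ℕ) : ℤ) + a).toNat = ((i : ℤ) + (a + a')).toNat := by omega
      have hphase : phase θ c' j * phase θ c (j + b') = phase θ (c + c') j * phase θ c b' := by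
        unfold phase
        rw [← Complex.exp_add, ← Complex.exp_add]
        congr 1
        push_cast
        ring
      have hq1 : (q : ℂ) ^ (p * i₂) = q ^ (p * i) * q ^ ((p : ℤ) * a') := by
        rw [← zpow_natCast q (p * i₂), ← zpow_natCast q (p * i), ← zpow_add₀ hq]
        congr 1
        push_cast
        rw [hi2]
        ring
      have hq2 : ((starRingEnd ℂ) q) ^ (r * i₂)
          = ((starRingEnd ℂ) q) ^ (r * i) * ((starRingEnd ℂ) q) ^ ((r : ℤ) * a') := by
        have hqc : (starRingEnd ℂ) q ≠ 0 := by simpa using hq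
        rw [← zpow_natCast _ (r * i₂), ← zpow_natCast _ (r * i), ← zpow_add₀ hqc]
        congr 1
        push_cast
        rw [hi2]
        ring
      have hsq : sqrtProd q M i₂ = sqrtProd q (M.map (· + a')) i := by
        unfold sqrtProd
        rw [Multiset.map_map]
        apply congrArg
        refine Multiset.map_congr rfl fun s hs => ?_
        simp only [Function.comp_apply]
        congr 1
        rw [hi2]
        ring
      have hsplit : sqrtProd q (M' + M.map (· + a')) i
          = sqrtProd q M' i * sqrtProd q (M.map (· + a')) i := by
        unfold sqrtProd
        rw [Multiset.map_add, Multiset.prod_add]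
      rw [hidx, show j + b' + b = j + (b + b') by ring, show k + c' + c = k + (c + c') by ring]
      congr 1
      calc phase θ c' j * coefFn q μ' p' r' M' i * (phase θ c (j + b') * coefFn q μ p r M i₂)
          = (phase θ c' j * phase θ c (j + b'))
            * (coefFn q μ' p' r' M' i * coefFn q μ p r M i₂) := by ring
        _ = _ := by
            rw [hphase]
            unfold coefFn
            rw [hq1, hq2, hsq, hsplit, add_mul, add_mul, pow_add, pow_add]
            ring
    · push_neg at hi
      have h1 : coefFn q μ' p' r' M' i = 0 := coefFn_vanish q μ' p' r' hpar' hi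
      have h2 : sqrtProd q (M' + M.map (· + a')) i = 0 := by
        unfold sqrtProd
        rw [Multiset.map_add, Multiset.prod_add]
        have := sqrtProd_vanish q hpar' hi
        unfold sqrtProd at this
        rw [this, zero_mul]
      have h3 : coefFn q (μ * μ' * phase θ c b' * q ^ ((p : ℤ) * a') * (starRingEnd ℂ) q ^ ((r : ℤ) * a'))
          (p + p') (r + r') (M' + M.map (· + a')) i = 0 := by
        rw [coefFn, h2, mul_zero]
      rw [h1, h3]
      simp
  · intro t
    rw [Multiset.count_add]
    have hmap : (M.map (· + a')).count t = M.count (t - a') := by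
      have : t = (t - a') + a' := by ring
      rw [this, Multiset.count_map_eq_count' _ _ (add_left_injective a')]
      simp
    rw [hmap]
    have h1 := hpar' t
    have h2 := hpar (t - a')
    by_cases c1 : chi a' t <;> by_cases c2 : chi a (t - a') <;> by_cases c3 : chi (a + a') t <;>
      simp only [c1, c2, c3, if_true, if_false] at h1 h2 ⊢ <;> unfold chi at c1 c2 c3 <;> omega
  · intro s hs t ht
    rcases Multiset.mem_add.mp hs with hs | hs
    · exact Multiset.mem_add.mpr (Or.inl (hconn' s hs t ht))
    · obtain ⟨u, hu, rfl⟩ := Multiset.mem_map.mp hs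
      rcases ht with ⟨ht1, ht2⟩ | ⟨ht1, ht2⟩
      · by_cases hta : t ≤ a'
        · refine Multiset.mem_add.mpr (Or.inr ?_)
          have : t - a' ∈ M := hconn u hu (t - a') (Or.inl ⟨by omega, by omega⟩)
          simpa using Multiset.mem_map_of_mem (· + a') this
        · refine Multiset.mem_add.mpr (Or.inl ?_)
          have h := hpar' t
          rw [if_pos (show chi a' t from Or.inr ⟨by omega, by omega⟩)] at h
          exact Multiset.count_pos.mp (by omega)
      · by_cases hta : a' + 1 ≤ t
        · refine Multiset.mem_add.mpr (Or.inr ?_)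
          have : t - a' ∈ M := hconn u hu (t - a') (Or.inr ⟨by omega, by omega⟩)
          simpa using Multiset.mem_map_of_mem (· + a') this
        · refine Multiset.mem_add.mpr (Or.inl ?_)
          have h := hpar' t
          rw [if_pos (show chi a' t from Or.inl ⟨by omega, by omega⟩)] at h
          exact Multiset.count_pos.mp (by omega)


/-- value of `|q|^{2i}` as a complex number -/
def tau (q : ℂ) (i : ℕ) : ℂ := ((‖q‖ ^ 2 : ℝ) : ℂ) ^ i

lemma zsplit {x : ℝ} (hx : 0 < x) (i : ℕ) (s : ℤ) :
    x ^ (2 * s) * (x ^ 2) ^ i = x ^ (2 * (s + (i : ℤ))) := by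
  rw [show (2 * (s + (i : ℤ))) = 2 * s + 2 * (i : ℤ) by ring, zpow_add₀ (ne_of_gt hx)]
  congr 1
  rw [show (2 * (i : ℤ)) = ((2 * i : ℕ) : ℤ) by push_cast; ring, zpow_natCast, pow_mul]

lemma sqrtProd_eval {q : ℂ} (hq0 : 0 < ‖q‖) (hq1 : ‖q‖ < 1)
    {M : Multiset ℤ}
    (hpar : ∀ t : ℤ, M.count t % 2 = 0)
    (hconn : ∀ s ∈ M, ∀ t : ℤ, (s ≤ t ∧ t ≤ 0) ∨ (1 ≤ t ∧ t ≤ s) → t ∈ M) (i : ℕ) :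
    sqrtProd q M i
      = ∏ s ∈ M.toFinset,
          ((1 : ℂ) - ((‖q‖ ^ (2 * s) : ℝ) : ℂ) * tau q i) ^ (M.count s / 2) := by
  unfold sqrtProd
  rw [Finset.prod_multiset_map_count]
  by_cases hall : ∀ s ∈ M, 0 ≤ (i : ℤ) + s
  · refine Finset.prod_congr rfl fun s hs => ?_
    have hsM : s ∈ M := Multiset.mem_toFinset.mp hs
    have h0 : 0 ≤ (i : ℤ) + s := hall s hsM
    obtain ⟨m, hm⟩ : ∃ m, M.count s = 2 * m := ⟨M.count s / 2, by have := hpar s; omega⟩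
    rw [hm, Nat.mul_div_cancel_left _ (by norm_num), pow_mul]
    congr 1
    unfold rt
    have hle : ‖q‖ ^ (2 * ((i : ℤ) + s)) ≤ 1 := by
      have h2 : (0:ℤ) ≤ 2 * ((i : ℤ) + s) := by omega
      rw [show (2 * ((i : ℤ) + s)) = ((2 * ((i : ℤ) + s)).toNat : ℤ) by omega, zpow_natCast]
      exact pow_le_one₀ hq0.le hq1.le
    have hnn : (0 : ℝ) ≤ 1 - ‖q‖ ^ (2 * ((i : ℤ) + s)) := by linarith
    rw [← Complex.ofReal_pow, Real.sq_sqrt hnn]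
    unfold tau
    rw [← Complex.ofReal_pow, ← Complex.ofReal_mul, zsplit hq0 i s,
      show s + (i:ℤ) = (i:ℤ) + s by ring]
    push_cast
    ring
  · push_neg at hall
    obtain ⟨s₀, hs₀M, hs₀⟩ := hall
    have hmem : (-(i : ℤ)) ∈ M := hconn s₀ hs₀M _ (Or.inl ⟨by omega, by omega⟩)
    have hcount := hpar (-(i : ℤ))
    have hcpos : 0 < M.count (-(i : ℤ)) := Multiset.count_pos.mpr hmem
    have hL : ∏ s ∈ M.toFinset, rt q (2 * ((i : ℤ) + s)) ^ M.count s = 0 := by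
      refine Finset.prod_eq_zero (Multiset.mem_toFinset.mpr hmem) ?_
      rw [show 2 * ((i : ℤ) + (-(i : ℤ))) = 0 by ring, rt_zero]
      exact zero_pow (by omega)
    have hR : ∏ s ∈ M.toFinset,
        ((1 : ℂ) - ((‖q‖ ^ (2 * s) : ℝ) : ℂ) * tau q i) ^ (M.count s / 2) = 0 := by
      refine Finset.prod_eq_zero (Multiset.mem_toFinset.mpr hmem) ?_
      have hbase : ((‖q‖ ^ (2 * (-(i:ℤ))) : ℝ) : ℂ) * tau q i = 1 := by
        unfold tau
        rw [← Complex.ofReal_pow, ← Complex.ofReal_mul, zsplit hq0 i (-(i:ℤ))]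
        norm_num
      rw [hbase]
      norm_num
      omega
    rw [hL, hR]


lemma phase_zero (θ : ℝ) (j : ℤ) : phase θ 0 j = 1 := by
  simp [phase]

lemma coefFn_triv (q μ : ℂ) (i : ℕ) : coefFn q μ 0 0 0 i = μ := by
  simp [coefFn, sqrtProd]

lemma goodWord_one (q : ℂ) (θ : ℝ) : GoodWord q θ (1 : UqH →L[ℂ] UqH) := by
  refine ⟨0, 0, 0, 1, 0, 0, 0, ?_, by norm_num, ?_, ?_⟩
  · intro i j k
    rw [phase_zero, coefFn_triv]
    simp
  · intro t
    have : ¬ chi 0 t := by unfold chi; omega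
    rw [if_neg this]
    simp
  · intro s hs
    simp at hs

lemma clm_ext_basis {T S : UqH →L[ℂ] UqH}
    (h : ∀ α : ℕ × ℤ × ℤ, T (lp.single 2 α 1) = S (lp.single 2 α 1)) : T = S := by
  refine ContinuousLinearMap.ext fun f => ?_
  have hf : HasSum (fun α : ℕ × ℤ × ℤ => lp.single 2 α (f α)) f :=
    lp.hasSum_single (by norm_num) f
  have hT : HasSum (fun α : ℕ × ℤ × ℤ => T (lp.single 2 α (f α))) (T f) := hf.mapL T
  have hS : HasSum (fun α : ℕ × ℤ × ℤ => S (lp.single 2 α (f α))) (S f) := hf.mapL S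
  refine hT.unique ?_
  have : ∀ α : ℕ × ℤ × ℤ, T (lp.single 2 α (f α)) = S (lp.single 2 α (f α)) := by
    intro α
    have h1 : lp.single 2 α (f α) = ((f α) • lp.single 2 α (1 : ℂ) : UqH) := by
      ext β
      by_cases hβ : β = α
      · subst hβ; simp [lp.single_apply_self]
      · simp [lp.single_apply_ne _ _ _ hβ, Pi.single_apply, hβ]
    rw [h1, map_smul, map_smul, h α]
  rw [funext this]
  exact hS


lemma mul_conj_pow (q : ℂ) (i : ℕ) : q ^ i * (starRingEnd ℂ) q ^ i = tau q i := by
  rw [← mul_pow, Complex.mul_conj, tau]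
  norm_cast
  rw [Complex.sq_norm]

end UqAux

open UqAux

/-- for `x` in the star-algebra `𝒪` generated by `A, B, D` and `1`, the
matrix of `x` is supported on pairs of basis vectors with equal `d`-eigenvalue (i.e. `x`
lies in the kernel of the derivation `[𝒟, ·]`) if and only if `x` is a linear combination
of the operators `(B B*)^m`, `m ∈ ℕ`. -/
theorem kernel_of_Dirac_derivation
    (q : ℂ) (hq0 : 0 < ‖q‖) (hq1 : ‖q‖ < 1)
    (θ : ℝ) (hθ : θ = Complex.arg q / Real.pi)
    (A B D : UqH →L[ℂ] UqH)
    (hA : ∀ (i : ℕ) (j k : ℤ),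
      A (e i j k) = ((Real.sqrt (1 - ‖q‖ ^ (2 * (i + 1))) : ℝ) : ℂ) • e (i + 1) j k)
    (hB : ∀ (i : ℕ) (j k : ℤ), B (e i j k) = (q ^ i) • e i (j + 1) k)
    (hD : ∀ (i : ℕ) (j k : ℤ),
      D (e i j k) = Complex.exp (-(2 * (Real.pi : ℂ) * (θ : ℂ) * (j : ℂ)) * Complex.I) • e i j (k + 1))
    (hAs : ∀ (i : ℕ) (j k : ℤ),
      (star A) (e i j k) = ((Real.sqrt (1 - ‖q‖ ^ (2 * i)) : ℝ) : ℂ) • e (i - 1) j k)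
    (hBs : ∀ (i : ℕ) (j k : ℤ), (star B) (e i j k) = ((starRingEnd ℂ) q ^ i) • e i (j - 1) k)
    (hDs : ∀ (i : ℕ) (j k : ℤ),
      (star D) (e i j k) = Complex.exp ((2 * (Real.pi : ℂ) * (θ : ℂ) * (j : ℂ)) * Complex.I) • e i j (k - 1))
    (x : UqH →L[ℂ] UqH) (hx : x ∈ StarAlgebra.adjoin ℂ ({A, B, D} : Set (UqH →L[ℂ] UqH))) :
    (∀ (i : ℕ) (j k : ℤ) (i' : ℕ) (j' k' : ℤ),
        dEig i' j' k' ≠ dEig i j k → ⟪e i' j' k', x (e i j k)⟫_ℂ = 0) ↔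
      x ∈ Submodule.span ℂ (Set.range fun m : ℕ => (B * star B) ^ m) := by
  have hqne : q ≠ 0 := fun h => by simp [h] at hq0
  -- the action of `(B ⬝ B*)^m` on basis vectors
  have hBB : ∀ (m : ℕ) (i : ℕ) (j k : ℤ),
      ((B * star B) ^ m) (e i j k) = (tau q i ^ m) • e i j k := by
    intro m
    induction m with
    | zero => intro i j k; simp
    | succ m ih =>
        intro i j k
        rw [pow_succ, ContinuousLinearMap.mul_apply, ContinuousLinearMap.mul_apply,
          hBs, map_smul, hB, smul_smul, show j - 1 + 1 = j by ring, map_smul, ih, smul_smul]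
        congr 1
        rw [pow_succ, mul_comm ((starRingEnd ℂ) q ^ i) (q ^ i), mul_conj_pow]
        ring
  constructor
  · intro hker
    -- `A`, `B`, `D` and their adjoints satisfy the structural invariant
    have gA : GoodWord q θ A := by
      refine ⟨1, 0, 0, 1, 0, 0, {1}, ?_, by norm_num, ?_, ?_⟩
      · intro i j k
        rw [hA i j k, phase_zero, show (((i:ℤ) + 1).toNat) = i + 1 by omega,
          add_zero, add_zero, one_mul]
        congr 1
        unfold coefFn sqrtProd
        rw [Multiset.map_singleton, Multiset.prod_singleton,
          show (2*((i:ℤ)+1)) = ((2*(i+1) : ℕ) : ℤ) by push_cast; ring, rt_natCast]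
        simp
      · intro t
        rw [Multiset.count_singleton]
        by_cases c : chi 1 t <;> simp only [c, if_true, if_false] <;> split_ifs <;>
          unfold chi at c <;> omega
      · intro s hs t ht
        simp only [Multiset.mem_singleton] at hs ⊢
        subst hs
        omega
    have gAs : GoodWord q θ (star A) := by
      refine ⟨-1, 0, 0, 1, 0, 0, {0}, ?_, by norm_num, ?_, ?_⟩
      · intro i j k
        rw [hAs i j k, show (((i:ℤ) + (-1)).toNat) = i - 1 by omega,
          add_zero, add_zero, phase_zero, one_mul]
        congr 1
        unfold coefFn sqrtProd
        rw [Multiset.map_singleton, Multiset.prod_singleton,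
          show (2*((i:ℤ)+0)) = ((2*i : ℕ) : ℤ) by push_cast; ring, rt_natCast]
        simp
      · intro t
        rw [Multiset.count_singleton]
        by_cases c : chi (-1) t <;> simp only [c, if_true, if_false] <;> split_ifs <;>
          unfold chi at c <;> omega
      · intro s hs t ht
        simp only [Multiset.mem_singleton] at hs ⊢
        subst hs
        omega
    have gB : GoodWord q θ B := by
      refine ⟨0, 1, 0, 1, 1, 0, 0, ?_, by norm_num, ?_, ?_⟩
      · intro i j k
        rw [hB i j k, phase_zero, show (((i:ℤ) + 0).toNat) = i by omega, add_zero, one_mul]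
        congr 1
        unfold coefFn sqrtProd
        simp
      · intro t
        have : ¬ chi 0 t := by unfold chi; omega
        rw [if_neg this]
        simp
      · intro s hs
        simp at hs
    have gBs : GoodWord q θ (star B) := by
      refine ⟨0, -1, 0, 1, 0, 1, 0, ?_, by norm_num, ?_, ?_⟩
      · intro i j k
        rw [hBs i j k, phase_zero, show (((i:ℤ) + 0).toNat) = i by omega, add_zero, one_mul,
          show j + (-1) = j - 1 by ring]
        congr 1
        unfold coefFn sqrtProd
        simp
      · intro t
        have : ¬ chi 0 t := by unfold chi; omega
        rw [if_neg this]
        simp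
      · intro s hs
        simp at hs
    have gD : GoodWord q θ D := by
      refine ⟨0, 0, 1, 1, 0, 0, 0, ?_, by norm_num, ?_, ?_⟩
      · intro i j k
        rw [hD i j k, show (((i:ℤ) + 0).toNat) = i by omega, add_zero, coefFn_triv, mul_one]
        congr 1
        unfold phase
        congr 1
        push_cast
        ring
      · intro t
        have : ¬ chi 0 t := by unfold chi; omega
        rw [if_neg this]
        simp
      · intro s hs
        simp at hs
    have gDs : GoodWord q θ (star D) := by
      refine ⟨0, 0, -1, 1, 0, 0, 0, ?_, by norm_num, ?_, ?_⟩
      · intro i j k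
        rw [hDs i j k, show (((i:ℤ) + 0).toNat) = i by omega, add_zero, coefFn_triv, mul_one,
          show k + (-1) = k - 1 by ring]
        congr 1
        unfold phase
        congr 1
        push_cast
        ring
      · intro t
        have : ¬ chi 0 t := by unfold chi; omega
        rw [if_neg this]
        simp
      · intro s hs
        simp at hs
    -- membership in the span of the multiplicative closure
    have hx2 : x ∈ Submodule.span ℂ
        ((Submonoid.closure ((({A, B, D} : Set (UqH →L[ℂ] UqH))) ∪ star {A, B, D}) :
          Submonoid (UqH →L[ℂ] UqH)) : Set (UqH →L[ℂ] UqH)) := by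
      have h := StarAlgebra.adjoin_eq_span (R := ℂ) ({A, B, D} : Set (UqH →L[ℂ] UqH))
      have hx' : x ∈ Subalgebra.toSubmodule
          (StarAlgebra.adjoin ℂ ({A, B, D} : Set (UqH →L[ℂ] UqH))).toSubalgebra := hx
      rwa [h] at hx'
    have hgoodall : ∀ w ∈ Submonoid.closure
        ((({A, B, D} : Set (UqH →L[ℂ] UqH))) ∪ star {A, B, D}), GoodWord q θ w := by
      intro w hw
      induction hw using Submonoid.closure_induction with
      | mem y hy =>
          rcases hy with hy | hy
          · simp only [Set.mem_insert_iff, Set.mem_singleton_iff] at hy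
            rcases hy with rfl | rfl | rfl
            · exact gA
            · exact gB
            · exact gD
          · rw [Set.mem_star] at hy
            simp only [Set.mem_insert_iff, Set.mem_singleton_iff] at hy
            rcases hy with h | h | h
            · rw [show y = star A by rw [← h, star_star]]; exact gAs
            · rw [show y = star B by rw [← h, star_star]]; exact gBs
            · rw [show y = star D by rw [← h, star_star]]; exact gDs
      | one => exact goodWord_one q θ
      | mul u v hu hv hgu hgv => exact goodWord_mul hqne hgu hgv
    obtain ⟨n, cf, wf, hrep⟩ := Submodule.mem_span_set'.mp hx2
    have hgw : ∀ t : Fin n, GoodWord q θ ((wf t : UqH →L[ℂ] UqH)) := fun t => hgoodall _ (wf t).2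
    choose av bv cv μv pv rv Mv hact hb hpar hconn using hgw
    -- coordinates of `x (e i j k)`
    have hcoord : ∀ (i : ℕ) (j k : ℤ) (α : ℕ × ℤ × ℤ),
        (x (e i j k) : ∀ _ : ℕ × ℤ × ℤ, ℂ) α
          = ∑ t : Fin n, (if α = (((i : ℤ) + av t).toNat, j + bv t, k + cv t)
              then cf t * (phase θ (cv t) j * coefFn q (μv t) (pv t) (rv t) (Mv t) i) else 0) := by
      intro i j k α
      have hx3 : x (e i j k) = ∑ t : Fin n,
          (cf t * (phase θ (cv t) j * coefFn q (μv t) (pv t) (rv t) (Mv t) i)) •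
            e (((i : ℤ) + av t).toNat) (j + bv t) (k + cv t) := by
        rw [← hrep, ContinuousLinearMap.sum_apply]
        refine Finset.sum_congr rfl fun t _ => ?_
        rw [ContinuousLinearMap.smul_apply, hact t, smul_smul]
      rw [hx3, lp.coeFn_sum, Finset.sum_apply]
      refine Finset.sum_congr rfl fun t _ => ?_
      rw [lp.coeFn_smul, Pi.smul_apply, e_apply, smul_eq_mul, mul_ite, mul_one, mul_zero]
    -- the polynomial associated to the diagonal words
    set Pw : Fin n → Polynomial ℂ := fun t =>
      Polynomial.C (μv t) * Polynomial.X ^ (pv t) *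
        ∏ s ∈ (Mv t).toFinset,
          ((1 : Polynomial ℂ) - Polynomial.C (((‖q‖ ^ (2 * s) : ℝ)) : ℂ) *
            Polynomial.X) ^ ((Mv t).count s / 2) with hPw
    set P : Polynomial ℂ :=
      ∑ t ∈ Finset.univ.filter (fun t => av t = 0 ∧ bv t = 0 ∧ cv t = 0), cf t • Pw t with hP
    have hdiag : ∀ t : Fin n, av t = 0 → bv t = 0 → ∀ i : ℕ,
        coefFn q (μv t) (pv t) (rv t) (Mv t) i = (Pw t).eval (tau q i) := by
      intro t ha0 hb0 i
      have hpr : pv t = rv t := by have := hb t; omega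
      have hpar0 : ∀ u : ℤ, (Mv t).count u % 2 = 0 := by
        intro u
        have h := hpar t u
        rw [ha0] at h
        rw [h, if_neg (by unfold chi; omega)]
      rw [coefFn, sqrtProd_eval hq0 hq1 hpar0 (hconn t) i, hPw]
      simp only [Polynomial.eval_mul, Polynomial.eval_pow, Polynomial.eval_C, Polynomial.eval_X,
        Polynomial.eval_prod, Polynomial.eval_sub, Polynomial.eval_one]
      have hqq : q ^ (pv t * i) * (starRingEnd ℂ) q ^ (rv t * i) = tau q i ^ pv t := by
        rw [← hpr, mul_comm (pv t) i, pow_mul, pow_mul, ← mul_pow, mul_conj_pow]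
      have hqq2 : μv t * q ^ (pv t * i) * (starRingEnd ℂ) q ^ (rv t * i)
          = μv t * tau q i ^ pv t := by
        rw [mul_assoc, hqq]
      rw [hqq2]
    -- the pointwise identity
    have hpt : ∀ (i : ℕ) (j k : ℤ), x (e i j k) = (P.eval (tau q i)) • e i j k := by
      intro i j k
      refine lp.ext (funext fun α => ?_)
      rw [lp.coeFn_smul, Pi.smul_apply, e_apply, smul_eq_mul, hcoord i j k α]
      obtain ⟨i', j', k'⟩ := α
      by_cases hα : ((i', j', k') : ℕ × ℤ × ℤ) = (i, j, k)
      · rw [if_pos hα, mul_one, hα]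
        have hterm : ∀ t : Fin n,
            (if ((i : ℕ), j, k) = (((i : ℤ) + av t).toNat, j + bv t, k + cv t)
              then cf t * (phase θ (cv t) j * coefFn q (μv t) (pv t) (rv t) (Mv t) i) else 0)
            = (if av t = 0 ∧ bv t = 0 ∧ cv t = 0
              then cf t * coefFn q (μv t) (pv t) (rv t) (Mv t) i else 0) := by
          intro t
          by_cases h1 : ((i : ℕ), j, k) = (((i : ℤ) + av t).toNat, j + bv t, k + cv t)
          · obtain ⟨e1, e2, e3⟩ : i = ((i : ℤ) + av t).toNat ∧ j = j + bv t ∧ k = k + cv t := by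
              simpa [Prod.ext_iff] using h1
            have hbv : bv t = 0 := by omega
            have hcv : cv t = 0 := by omega
            rw [if_pos h1]
            by_cases h2 : av t = 0
            · rw [if_pos ⟨h2, hbv, hcv⟩, hcv, phase_zero, one_mul]
            · rw [if_neg (by tauto)]
              have hlt : (i : ℤ) + av t < 0 := by omega
              rw [coefFn_vanish q _ _ _ (hpar t) hlt]
              ring
          · rw [if_neg h1]
            by_cases h2 : av t = 0 ∧ bv t = 0 ∧ cv t = 0
            · exfalso
              apply h1
              obtain ⟨h2a, h2b, h2c⟩ := h2
              rw [h2a, h2b, h2c]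
              simp
            · rw [if_neg h2]
        rw [Finset.sum_congr rfl fun t _ => hterm t, ← Finset.sum_filter, hP,
          Polynomial.eval_finset_sum]
        refine Finset.sum_congr rfl fun t ht => ?_
        obtain ⟨-, h0⟩ := Finset.mem_filter.mp ht
        rw [Polynomial.eval_smul, smul_eq_mul, hdiag t h0.1 h0.2.1 i]
      · rw [if_neg hα, mul_zero]
        by_cases hd : dEig i' j' k' = dEig i j k
        · have hk' : k' = k := ((dEig_eq_iff _ _ _ _ _ _).mp hd).2
          rw [hk']
          have hne : ¬ (i' = i ∧ j' - j = 0) := by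
            rintro ⟨rfl, h0⟩
            exact hα (by rw [show j' = j by omega, hk'])
          have hsum : ∀ j1 : ℤ,
              (∑ t : Fin n, (if ((i' : ℕ), j1 + (j' - j), k)
                    = (((i : ℤ) + av t).toNat, j1 + bv t, k + cv t)
                  then cf t * (phase θ (cv t) j1 * coefFn q (μv t) (pv t) (rv t) (Mv t) i) else 0))
              = ∑ t : Fin n, (if (i' = ((i : ℤ) + av t).toNat ∧ bv t = j' - j ∧ cv t = 0)
                  then cf t * coefFn q (μv t) (pv t) (rv t) (Mv t) i else 0) := by
            intro j1
            refine Finset.sum_congr rfl fun t _ => ?_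
            by_cases h1 : ((i' : ℕ), j1 + (j' - j), k)
                = (((i : ℤ) + av t).toNat, j1 + bv t, k + cv t)
            · obtain ⟨e1, e2, e3⟩ : i' = ((i : ℤ) + av t).toNat ∧ j1 + (j' - j) = j1 + bv t
                  ∧ k = k + cv t := by simpa [Prod.ext_iff] using h1
              have hcv : cv t = 0 := by omega
              rw [if_pos h1, if_pos ⟨e1, by omega, hcv⟩, hcv, phase_zero, one_mul]
            · rw [if_neg h1, if_neg ?_]
              rintro ⟨c1, c2, c3⟩
              exact h1 (by rw [← c1, c2, c3]; simp)
          obtain ⟨j₀, hj₀⟩ : ∃ j₀ : ℤ, dRe i' (j₀ + (j' - j)) ≠ dRe i j₀ := by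
            by_cases hcase : (i' : ℤ) + (j' - j) = i
            · refine ⟨min (-1) (-(j' - j) - 1), ?_⟩
              unfold dRe
              rw [if_neg (by omega), if_neg (by omega)]
              omega
            · refine ⟨max 0 (-(j' - j)), ?_⟩
              unfold dRe
              rw [if_pos (by omega), if_pos (by omega)]
              omega
          have hker0 := hker i j₀ k i' (j₀ + (j' - j)) k
            (by intro hEq; exact hj₀ ((dEig_eq_iff _ _ _ _ _ _).mp hEq).1)
          rw [inner_e_left, hcoord i j₀ k (i', j₀ + (j' - j), k), hsum j₀] at hker0
          have hj'eq : j' = j + (j' - j) := by ring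
          rw [show ((i' : ℕ), j', k) = ((i' : ℕ), j + (j' - j), k) by rw [← hj'eq]]
          rw [hsum j]
          exact hker0
        · have h0 := hker i j k i' j' k' hd
          rw [inner_e_left, hcoord i j k (i', j', k')] at h0
          exact h0
    -- conclude
    have hxy : x = ∑ m ∈ P.support, P.coeff m • (B * star B) ^ m := by
      apply clm_ext_basis
      rintro ⟨i, j, k⟩
      have h1 : lp.single 2 ((i : ℕ), (j : ℤ), (k : ℤ)) (1 : ℂ) = e i j k := rfl
      rw [h1, hpt i j k, ContinuousLinearMap.sum_apply]
      have h2 : ∀ m ∈ P.support,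
          (P.coeff m • (B * star B) ^ m) (e i j k) = (P.coeff m * tau q i ^ m) • e i j k := by
        intro m _
        rw [ContinuousLinearMap.smul_apply, hBB m i j k, smul_smul]
      rw [Finset.sum_congr rfl h2, ← Finset.sum_smul]
      congr 1
      rw [Polynomial.eval_eq_sum, Polynomial.sum_def]
    rw [hxy]
    exact Submodule.sum_mem _ fun m _ =>
      Submodule.smul_mem _ _ (Submodule.subset_span ⟨m, rfl⟩)
  · intro hsp i j k i' j' k' hd
    let V : Submodule ℂ (UqH →L[ℂ] UqH) :=
      { carrier := {y | ∀ (i : ℕ) (j k : ℤ) (i' : ℕ) (j' k' : ℤ),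
          dEig i' j' k' ≠ dEig i j k → ⟪e i' j' k', y (e i j k)⟫_ℂ = 0}
        add_mem' := by
          intro y z hy hz i j k i' j' k' hd
          rw [ContinuousLinearMap.add_apply, inner_add_right, hy i j k i' j' k' hd,
            hz i j k i' j' k' hd, add_zero]
        zero_mem' := by
          intro i j k i' j' k' hd
          simp
        smul_mem' := by
          intro s y hy i j k i' j' k' hd
          rw [ContinuousLinearMap.smul_apply, inner_smul_right, hy i j k i' j' k' hd, mul_zero] }
    have hVle : Submodule.span ℂ (Set.range fun m : ℕ => (B * star B) ^ m) ≤ V := by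
      rw [Submodule.span_le]
      rintro y ⟨m, rfl⟩
      intro i1 j1 k1 i1' j1' k1' hd1
      rw [hBB m i1 j1 k1, inner_smul_right, inner_e_left, e_apply]
      have hne : ((i1' : ℕ), j1', k1') ≠ ((i1 : ℕ), j1, k1) := by
        intro h1
        obtain ⟨ha, hb2, hc⟩ : i1' = i1 ∧ j1' = j1 ∧ k1' = k1 := by
          simpa [Prod.ext_iff] using h1
        subst ha; subst hb2; subst hc
        exact hd1 rfl
      rw [if_neg hne, mul_zero]
    exact hVle hsp i j k i' j' k' hd
end
end
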